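/- arXiv:1009.4777 — 4 statements merged into one kernel-verified Lean document; each statement's English description precedes it below -/
import Mathlib

section
/- For any real parameter b, the function w(x) = (1/(1+b^2))^{1/4} * sqrt(1 + b^2 cos^2 x) is positive, 2π-periodic, and satisfies w(x)^3 (w''(x) + w(x)) = 1 for all real x. -/
open Real

theorem stmt_0 (b : ℝ) (w : ℝ → ℝ)
    (hw : w = fun x => (1 / (1 + b ^ 2)) ^ ((1 : ℝ) / 4) * Real.sqrt (1 + b ^ 2 * Real.cos x ^ 2)) :
    ∀ x : ℝ, 0 < w x ∧ w (x + 2 * Real.pi) = w x ∧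
      w x ^ 3 * (deriv (deriv w) x + w x) = 1 := by
  have hb : (0:ℝ) < 1 + b ^ 2 := by positivity
  set c : ℝ := (1 / (1 + b ^ 2)) ^ ((1 : ℝ) / 4) with hc
  have hcpos : 0 < c := by positivity
  have hg : ∀ x : ℝ, 0 < 1 + b ^ 2 * Real.cos x ^ 2 := fun x => by positivity
  have hs : ∀ x : ℝ, 0 < Real.sqrt (1 + b ^ 2 * Real.cos x ^ 2) :=
    fun x => Real.sqrt_pos.mpr (hg x)
  have hsqg : ∀ x : ℝ, HasDerivAt (fun y => Real.sqrt (1 + b ^ 2 * Real.cos y ^ 2))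
      (1 / (2 * Real.sqrt (1 + b ^ 2 * Real.cos x ^ 2)) *
        (b ^ 2 * (2 * Real.cos x * (-Real.sin x)))) x := by
    intro x
    have hgx : HasDerivAt (fun y => 1 + b ^ 2 * Real.cos y ^ 2)
        (b ^ 2 * (2 * Real.cos x * (-Real.sin x))) x := by
      have h1 : HasDerivAt (fun y => Real.cos y ^ 2)
          ((2 : ℕ) * Real.cos x ^ (2 - 1) * (-Real.sin x)) x :=
        (Real.hasDerivAt_cos x).pow 2
      have := (h1.const_mul (b ^ 2)).const_add 1
      refine this.congr_deriv ?_
      ring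
    exact (Real.hasDerivAt_sqrt (ne_of_gt (hg x))).comp x hgx
  have hasD : ∀ x : ℝ, HasDerivAt w
      (c * (-(b ^ 2) * Real.cos x * Real.sin x / Real.sqrt (1 + b ^ 2 * Real.cos x ^ 2))) x := by
    intro x
    rw [hw]
    have := (hsqg x).const_mul c
    refine this.congr_deriv ?_
    have := (hs x).ne'
    field_simp
  have hderiv : deriv w = fun x =>
      c * (-(b ^ 2) * Real.cos x * Real.sin x / Real.sqrt (1 + b ^ 2 * Real.cos x ^ 2)) :=
    funext fun x => (hasD x).deriv
  intro x
  refine ⟨?_, ?_, ?_⟩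
  · rw [hw]; exact mul_pos hcpos (hs x)
  · simp [hw, Real.cos_add_two_pi]
  · -- second derivative
    have hu : HasDerivAt (fun y => -(b ^ 2) * Real.cos y * Real.sin y)
        (-(b ^ 2) * (Real.cos x ^ 2 - Real.sin x ^ 2)) x := by
      have := (((Real.hasDerivAt_cos x).const_mul (-(b ^ 2))).mul (Real.hasDerivAt_sin x))
      refine this.congr_deriv ?_
      ring
    have hdd : HasDerivAt (deriv w)
        (c * ((-(b ^ 2) * (Real.cos x ^ 2 - Real.sin x ^ 2) *
            Real.sqrt (1 + b ^ 2 * Real.cos x ^ 2) -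
          -(b ^ 2) * Real.cos x * Real.sin x *
            (1 / (2 * Real.sqrt (1 + b ^ 2 * Real.cos x ^ 2)) *
              (b ^ 2 * (2 * Real.cos x * (-Real.sin x))))) /
          Real.sqrt (1 + b ^ 2 * Real.cos x ^ 2) ^ 2)) x := by
      rw [hderiv]
      exact ((hu.div (hsqg x) (hs x).ne').const_mul c)
    rw [hdd.deriv, hw]
    set S := Real.sqrt (1 + b ^ 2 * Real.cos x ^ 2) with hS
    have hSne : S ≠ 0 := (hs x).ne'
    have hS2 : S ^ 2 = 1 + b ^ 2 * Real.cos x ^ 2 := Real.sq_sqrt (hg x).le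
    have hc4 : c ^ 4 = 1 / (1 + b ^ 2) := by
      rw [hc, ← Real.rpow_natCast ((1 / (1 + b ^ 2)) ^ ((1:ℝ)/4)) 4,
        ← Real.rpow_mul (by positivity)]
      norm_num
    have key : (c * S) ^ 3 *
        (c * ((-(b ^ 2) * (Real.cos x ^ 2 - Real.sin x ^ 2) * S -
          -(b ^ 2) * Real.cos x * Real.sin x *
            (1 / (2 * S) * (b ^ 2 * (2 * Real.cos x * (-Real.sin x))))) / S ^ 2) + c * S) =
        c ^ 4 * (-(b ^ 2) * (Real.cos x ^ 2 - Real.sin x ^ 2) * S ^ 2 -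
          -(b ^ 2) * Real.cos x * Real.sin x * (b ^ 2 * Real.cos x * (-Real.sin x)) +
          (S ^ 2) ^ 2) := by
      field_simp
    rw [key, hS2, hc4]
    have hpy := Real.sin_sq_add_cos_sq x
    field_simp
    nlinarith [hpy, sq_nonneg b, sq_nonneg (Real.cos x)]
end

section
/- Let p > 2 and c > 0, and choose λ₁ with p/√(p−1) < λ₁ < p/c and λ₂ = p/c. Set h* = (p − cλ₁)/(p + λ₁²/p). Then h* > 0, and along the half-line G = λ₁H with 0 ≤ H ≤ h*, the vector field X_c(H,G) = (HG, −pH² + pH − cG + ((p−1)/p)G²) satisfies ⟨X_c, (−λ₁, 1)⟩ = (p − cλ₁ − (p + λ₁²/p)H) H ≥ 0, with equality only at H = 0 and H = h*. -/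
open Real

theorem stmt_15 (p c lam1 h : ℝ) (hp : 2 < p) (hc : 0 < c)
    (hlam1 : p / Real.sqrt (p - 1) < lam1) (hlam1' : lam1 < p / c)
    (hs : h = (p - c * lam1) / (p + lam1 ^ 2 / p)) :
    0 < h ∧
      ∀ H : ℝ, 0 ≤ H → H ≤ h →
        (-lam1) * (H * (lam1 * H)) +
            (-p * H ^ 2 + p * H - c * (lam1 * H) + ((p - 1) / p) * (lam1 * H) ^ 2)
          = (p - c * lam1 - (p + lam1 ^ 2 / p) * H) * H ∧
        0 ≤ (p - c * lam1 - (p + lam1 ^ 2 / p) * H) * H ∧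
        ((p - c * lam1 - (p + lam1 ^ 2 / p) * H) * H = 0 ↔ H = 0 ∨ H = h) := by
  have hp0 : 0 < p := by linarith
  have hN : 0 < p - c * lam1 := by
    have := (lt_div_iff₀ hc).mp hlam1'
    nlinarith
  have hD : 0 < p + lam1 ^ 2 / p := by positivity
  have hh : 0 < h := by rw [hs]; positivity
  refine ⟨hh, fun H h0 h1 => ?_⟩
  have hdh : (p + lam1 ^ 2 / p) * h = p - c * lam1 := by
    rw [hs]; field_simp
  have hkey : p - c * lam1 - (p + lam1 ^ 2 / p) * H = (p + lam1 ^ 2 / p) * (h - H) := by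
    rw [mul_sub, hdh]
  refine ⟨by field_simp; ring, ?_, ?_⟩
  · rw [hkey]; exact mul_nonneg (mul_nonneg hD.le (by linarith)) h0
  · rw [hkey]
    constructor
    · intro he
      rcases mul_eq_zero.mp he with he | he
      · rcases mul_eq_zero.mp he with he | he
        · exact absurd he hD.ne'
        · right; linarith
      · left; exact he
    · rintro (rfl | rfl) <;> ring
end

section
/- Let p > 2 and c > 0. On the set of points (H,G) with G = λH, λ₁ ≤ λ ≤ p/c, and 0 < H ≤ h* = (p − cλ₁)/(p + λ₁²/p), where λ₁ satisfies p/√(p−1) < λ₁ < p/c, the second component of the ODE system H_ξ = G, G_ξ = (−pH² + pH − cG + ((p−1)/p)G²)/H satisfies G_ξ = (p − cλ) + (((p−1)/p)λ² − p)H ≥ (((p−1)/p)λ₁² − p)H > 0. -/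
open Real

theorem stmt_16 (p c lam1 l h H : ℝ) (hp : 2 < p) (hc : 0 < c)
    (hlam1 : p / Real.sqrt (p - 1) < lam1) (hlam1' : lam1 < p / c)
    (hl : lam1 ≤ l) (hl' : l ≤ p / c)
    (hs : h = (p - c * lam1) / (p + lam1 ^ 2 / p))
    (hH : 0 < H) (hH' : H ≤ h) :
    (-p * H ^ 2 + p * H - c * (l * H) + ((p - 1) / p) * (l * H) ^ 2) / H
        = (p - c * l) + (((p - 1) / p) * l ^ 2 - p) * H ∧
      (((p - 1) / p) * lam1 ^ 2 - p) * H
        ≤ (p - c * l) + (((p - 1) / p) * l ^ 2 - p) * H ∧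
      0 < (((p - 1) / p) * lam1 ^ 2 - p) * H := by
  have hp0 : (0:ℝ) < p := by linarith
  have hp1 : (0:ℝ) < p - 1 := by linarith
  have hs0 : 0 < Real.sqrt (p - 1) := Real.sqrt_pos.mpr hp1
  have hsq : Real.sqrt (p - 1) ^ 2 = p - 1 := Real.sq_sqrt hp1.le
  have h1 : p < lam1 * Real.sqrt (p - 1) := by
    have := (div_lt_iff₀ hs0).mp hlam1
    linarith
  have hlam1pos : 0 < lam1 := by nlinarith
  have hkey : p ^ 2 < lam1 ^ 2 * (p - 1) := by nlinarith
  have hcoef : 0 < ((p - 1) / p) * lam1 ^ 2 - p := by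
    rw [div_mul_eq_mul_div, lt_sub_iff_add_lt, lt_div_iff₀ hp0]
    nlinarith
  have hlpos : 0 < l := lt_of_lt_of_le hlam1pos hl
  have hcl : c * l ≤ p := by
    have := (le_div_iff₀ hc).mp hl'
    linarith
  refine ⟨?_, ?_, mul_pos hcoef hH⟩
  · field_simp
    ring
  · have h2 : lam1 ^ 2 ≤ l ^ 2 := by nlinarith
    have h3 : ((p - 1) / p) * lam1 ^ 2 ≤ ((p - 1) / p) * l ^ 2 := by
      apply mul_le_mul_of_nonneg_left h2
      positivity
    nlinarith
end

section
/- Let p ≥ 2 and let g₁, g₂ be two solutions on an interval (0, ε) of the ODE g'(H) = ((p−1)g(H) − pc)/(pH) + (p − pH)/g(H), with c > 0, such that 0 < g₁(H) < g₂(H) ≤ λH on (0,ε) for some λ > 0, and g₂(H) − g₁(H) → 0 as H → 0⁺. Then the difference w = g₂ − g₁ satisfies w'(H) = ((p−1)/(pH) − (p − pH)/(g₁(H)g₂(H))) w(H), and for H sufficiently small, w'(H) < 0; consequently no two such distinct solutions exist (w ≡ 0), a contradiction with w > 0. -/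
open Real Set Filter

theorem stmt_19 (p c ε lam : ℝ) (hp : 2 ≤ p) (hc : 0 < c) (hε : 0 < ε) (hlam : 0 < lam)
    (g₁ g₂ : ℝ → ℝ)
    (hg₁ : ∀ H ∈ Set.Ioo (0 : ℝ) ε,
      HasDerivAt g₁ (((p - 1) * g₁ H - p * c) / (p * H) + (p - p * H) / g₁ H) H)
    (hg₂ : ∀ H ∈ Set.Ioo (0 : ℝ) ε,
      HasDerivAt g₂ (((p - 1) * g₂ H - p * c) / (p * H) + (p - p * H) / g₂ H) H)
    (horder : ∀ H ∈ Set.Ioo (0 : ℝ) ε, 0 < g₁ H ∧ g₁ H < g₂ H ∧ g₂ H ≤ lam * H)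
    (hlim : Filter.Tendsto (fun H => g₂ H - g₁ H) (nhdsWithin 0 (Set.Ioi 0)) (nhds 0)) :
    (∀ H ∈ Set.Ioo (0 : ℝ) ε,
      HasDerivAt (fun H => g₂ H - g₁ H)
        (((p - 1) / (p * H) - (p - p * H) / (g₁ H * g₂ H)) * (g₂ H - g₁ H)) H) ∧
    (∃ δ : ℝ, 0 < δ ∧ δ ≤ ε ∧ ∀ H ∈ Set.Ioo (0 : ℝ) δ,
      ((p - 1) / (p * H) - (p - p * H) / (g₁ H * g₂ H)) * (g₂ H - g₁ H) < 0) ∧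
    False := by
  have hp0 : (0:ℝ) < p := lt_of_lt_of_le (by norm_num) hp
  -- Part 1: derivative of the difference
  have hderiv : ∀ H ∈ Set.Ioo (0 : ℝ) ε,
      HasDerivAt (fun H => g₂ H - g₁ H)
        (((p - 1) / (p * H) - (p - p * H) / (g₁ H * g₂ H)) * (g₂ H - g₁ H)) H := by
    intro H hH
    have h1 := (hg₂ H hH).sub (hg₁ H hH)
    refine h1.congr_deriv ?_
    obtain ⟨ha, hab, _⟩ := horder H hH
    have hb : 0 < g₂ H := ha.trans hab
    have hH0 : H ≠ 0 := ne_of_gt hH.1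
    field_simp
    ring
  refine ⟨hderiv, ?_⟩
  -- choose δ
  set δ : ℝ := min ε (min (1/2) (2 / ((p - 1) * lam ^ 2)))
  have hp1 : (0:ℝ) < p - 1 := by linarith
  have hδpos : 0 < δ := by
    apply lt_min hε
    apply lt_min (by norm_num)
    positivity
  have hδε : δ ≤ ε := min_le_left _ _
  have hδhalf : δ ≤ 1/2 := le_trans (min_le_right _ _) (min_le_left _ _)
  have hδ2 : δ ≤ 2 / ((p - 1) * lam ^ 2) := le_trans (min_le_right _ _) (min_le_right _ _)
  -- Part 2: negativity of the derivative on (0, δ)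
  have hneg : ∀ H ∈ Set.Ioo (0 : ℝ) δ,
      ((p - 1) / (p * H) - (p - p * H) / (g₁ H * g₂ H)) * (g₂ H - g₁ H) < 0 := by
    intro H hH
    have hHε : H ∈ Set.Ioo (0:ℝ) ε := ⟨hH.1, lt_of_lt_of_le hH.2 hδε⟩
    obtain ⟨ha, hab, hb2⟩ := horder H hHε
    have hb : 0 < g₂ H := ha.trans hab
    have hH0 : 0 < H := hH.1
    have hHhalf : H < 1/2 := lt_of_lt_of_le hH.2 hδhalf
    -- g₁ g₂ < lam^2 H^2
    have hg1lam : g₁ H < lam * H := lt_of_lt_of_le hab hb2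
    have hprod : g₁ H * g₂ H < lam ^ 2 * H ^ 2 := by
      nlinarith [mul_lt_mul_of_pos_right hg1lam hb, mul_le_mul_of_nonneg_left hb2 (by positivity : (0:ℝ) ≤ lam * H)]
    -- key: (p-1)/(pH) < (p - pH)/(g₁ g₂)
    have hkey : (p - 1) / (p * H) < (p - p * H) / (g₁ H * g₂ H) := by
      have h1 : (p - 1) * lam ^ 2 * H < 2 := by
        have := hH.2.trans_le hδ2
        calc (p - 1) * lam ^ 2 * H < (p - 1) * lam ^ 2 * (2 / ((p - 1) * lam ^ 2)) := by
              apply mul_lt_mul_of_pos_left this (by positivity)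
          _ = 2 := by field_simp
      have h2 : (2:ℝ) ≤ p * p * (1 - H) := by nlinarith
      have hnum : (p - 1) * (g₁ H * g₂ H) < (p - p * H) * (p * H) := by
        have : (p - 1) * (g₁ H * g₂ H) < (p - 1) * (lam ^ 2 * H ^ 2) :=
          mul_lt_mul_of_pos_left hprod hp1
        nlinarith
      rw [div_lt_div_iff₀ (by positivity) (by positivity)]
      exact hnum
    have hcoef : (p - 1) / (p * H) - (p - p * H) / (g₁ H * g₂ H) < 0 := by linarith
    have hw : 0 < g₂ H - g₁ H := sub_pos.mpr hab
    exact mul_neg_of_neg_of_pos hcoef hw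
  refine ⟨⟨δ, hδpos, hδε, hneg⟩, ?_⟩
  -- Part 3: contradiction
  set w : ℝ → ℝ := fun H => g₂ H - g₁ H with hw_def
  have hmono : StrictAntiOn w (Set.Ioo 0 δ) := by
    apply strictAntiOn_of_deriv_neg (convex_Ioo _ _)
    · intro x hx
      exact (hderiv x ⟨hx.1, lt_of_lt_of_le hx.2 hδε⟩).continuousAt.continuousWithinAt
    · intro x hx
      rw [interior_Ioo] at hx
      rw [(hderiv x ⟨hx.1, lt_of_lt_of_le hx.2 hδε⟩).deriv]
      exact hneg x hx
  have hb2 : δ/2 ∈ Set.Ioo (0:ℝ) δ := ⟨by positivity, by linarith⟩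
  have hwpos : 0 < w (δ/2) := by
    obtain ⟨_, hab, _⟩ := horder (δ/2) ⟨hb2.1, lt_of_lt_of_le hb2.2 hδε⟩
    exact sub_pos.mpr hab
  have hev1 : ∀ᶠ a in nhdsWithin 0 (Set.Ioi 0), w a < w (δ/2) :=
    hlim.eventually_lt_const hwpos
  have hev2 : ∀ᶠ a in nhdsWithin 0 (Set.Ioi 0), a ∈ Set.Ioo (0:ℝ) (δ/2) :=
    Ioo_mem_nhdsGT_of_mem ⟨le_refl _, by positivity⟩
  obtain ⟨a, hwa, haI⟩ := (hev1.and hev2).exists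
  have : w (δ/2) < w a := hmono ⟨haI.1, haI.2.trans (by linarith)⟩ hb2 haI.2
  linarith
end
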